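/- The co-word problem of the free group FG(X) of finite rank, i.e. the language { u # v̄ : u, v ∈ (X^±)*, uv⁻¹ ≠ 1 in FG(X) } (equivalently { w ∈ (X^± ∪ {#})* with exactly one # : the word obtained by deleting # does not reduce to 1 in FG(X) }), is context-free. -/

import Mathlib

/-- The symmetric alphabet `X^± = X ∪ X̄`, encoded as pairs (letter, sign). -/
abbrev Letter (X : Type) : Type := X × Bool

/-- Formal inverse of a letter. -/
def linv {X : Type} (a : Letter X) : Letter X := (a.1, !a.2)

/-- `wordInv v` is `v̄`: the reverse of `v` with every letter replaced by its inverse. -/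
def wordInv {X : Type} (v : List (Letter X)) : List (Letter X) := v.reverse.map linv

/-- The vertex set of the Munn tree of `w`: reductions of all prefixes of `w` in FG(X). -/
def munn {X : Type} (w : List (Letter X)) : Set (FreeGroup X) :=
  {g | ∃ p : List (Letter X), p <+: w ∧ FreeGroup.mk p = g}

/-- A word represents an idempotent of FIM(X) iff it reduces to 1 in FG(X). -/
def IsIdemWord {X : Type} (w : List (Letter X)) : Prop := FreeGroup.mk w = 1

/-- A word is reduced iff it has no adjacent mutually inverse letters. -/
def Reduced {X : Type} (w : List (Letter X)) : Prop :=
  List.Chain' (fun a b => b ≠ linv a) w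

/-- The Munn tree of `w` contains the edge from (the reduced word) `p` to `p · a`. -/
def EdgeIn {X : Type} (w : List (Letter X)) (p : List (Letter X)) (a : Letter X) : Prop :=
  Reduced (p ++ [a]) ∧ FreeGroup.mk p ∈ munn w ∧ FreeGroup.mk (p ++ [a]) ∈ munn w

/-- An idempotent word avoids `x` iff its Munn tree omits the edge `(ε, x)`. -/
def Avoids {X : Type} (w : List (Letter X)) (x : Letter X) : Prop := ¬ EdgeIn w [] x

/-- Equality in the free inverse monoid FIM(X): equality of Munn trees. -/
def EqFIM {X : Type} (u v : List (Letter X)) : Prop :=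
  FreeGroup.mk u = FreeGroup.mk v ∧ munn u = munn v

/-- The alphabet `X^± ∪ {#}`. -/
abbrev HSym (X : Type) : Type := Letter X ⊕ Unit

/-- The hashSym symbol. -/
def hashSym {X : Type} : HSym X := Sum.inr ()

/-- `encode u v = u # v̄`. -/
def encode {X : Type} (u v : List (Letter X)) : List (HSym X) :=
  u.map Sum.inl ++ hashSym :: (wordInv v).map Sum.inl


instance {T N : Type} [DecidableEq T] [DecidableEq N] : DecidableEq (ContextFreeRule T N) :=
  fun a b => decidable_of_iff (a.input = b.input ∧ a.output = b.output)
    (by cases a; cases b; simp)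

/-- Interleaving `e₁x₁e₂x₂⋯e_mx_m`. -/
def interE {X : Type} (es : List (List (Letter X))) (xs : List (Letter X)) : List (Letter X) :=
  (List.zipWith (fun e x => e ++ [x]) es xs).flatten

/-- Interleaving `y₁f₁y₂f₂⋯y_nf_n`. -/
def interF {X : Type} (ys : List (Letter X)) (fs : List (List (Letter X))) : List (Letter X) :=
  (List.zipWith (fun y f => y :: f) ys fs).flatten

/-- Derivability of a terminal word from a given nonterminal of a grammar. -/
def DerivesFrom {T : Type} (g : ContextFreeGrammar T) (n : g.NT) (w : List T) : Prop :=
  g.Derives [Symbol.nonterminal n] (w.map Symbol.terminal)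

section PartA
namespace CoWP

open FreeGroup List

variable {X : Type}

lemma mk_append (u v : List (Letter X)) :
    FreeGroup.mk (u ++ v) = FreeGroup.mk u * FreeGroup.mk v :=
  FreeGroup.mul_mk.symm

lemma mk_insert_pair (u v : List (Letter X)) (x : X) (b : Bool) :
    FreeGroup.mk (u ++ (x, b) :: (x, !b) :: v) = FreeGroup.mk (u ++ v) := by
  rw [← FreeGroup.quot_mk_eq_mk, ← FreeGroup.quot_mk_eq_mk]
  exact Quot.sound FreeGroup.Red.Step.not

lemma mk_pair (a : Letter X) : FreeGroup.mk [a, linv a] = 1 := by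
  obtain ⟨x, c⟩ := a
  have h := mk_insert_pair ([] : List (Letter X)) [] x c
  simpa [linv, FreeGroup.one_eq_mk] using h

lemma chain'_of_no_pair :
    ∀ l : List (Letter X),
      (∀ (u v : List (Letter X)) (x : X) (b : Bool), l ≠ u ++ (x, b) :: (x, !b) :: v) →
      Reduced l := by
  intro l
  induction l with
  | nil => intro _; exact List.isChain_nil
  | cons a t ih =>
    intro h
    cases t with
    | nil => exact List.isChain_singleton a
    | cons b t' =>
      rw [Reduced, show @List.Chain' = @List.IsChain from rfl, List.isChain_cons_cons]
      constructor
      · intro hb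
        obtain ⟨x, c⟩ := a
        exact h [] t' x c (by simp [hb, linv])
      · exact ih (fun u v x c hne => h (a :: u) v x c (by simp [hne]))

lemma reduced_reduce [DecidableEq X] (w : List (Letter X)) : Reduced (FreeGroup.reduce w) := by
  apply chain'_of_no_pair
  intro u v x b h
  exact FreeGroup.reduce.not h

lemma interF_cons' (y : Letter X) (ys : List (Letter X)) (f : List (Letter X))
    (fs : List (List (Letter X))) :
    interF (y :: ys) (f :: fs) = y :: (f ++ interF ys fs) := by
  simp [interF]

lemma interF_nil_fs (r : List (Letter X)) :
    interF r (List.replicate r.length ([] : List (Letter X))) = r := by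
  induction r with
  | nil => rfl
  | cons x t ih =>
    simp only [List.length_cons, List.replicate_succ, interF_cons', List.nil_append]
    rw [ih]

lemma interF_cons (y : Letter X) (ys : List (Letter X)) (f : List (Letter X))
    (fs : List (List (Letter X))) :
    interF (y :: ys) (f :: fs) = y :: (f ++ interF ys fs) := interF_cons' y ys f fs

lemma insert_decomp (x : X) (b : Bool) :
    ∀ (xs : List (Letter X)) (fs : List (List (Letter X))) (e u v : List (Letter X)),
      fs.length = xs.length → e ++ interF xs fs = u ++ v →
      FreeGroup.mk e = 1 → (∀ f ∈ fs, FreeGroup.mk f = 1) →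
      ∃ e' fs', fs'.length = xs.length ∧
        e' ++ interF xs fs' = u ++ (x, b) :: (x, !b) :: v ∧
        FreeGroup.mk e' = 1 ∧ ∀ f ∈ fs', FreeGroup.mk f = 1 := by
  intro xs
  induction xs with
  | nil =>
    intro fs e u v hlen heq he hfs
    have hfs0 : fs = [] := List.length_eq_zero_iff.mp hlen
    subst hfs0
    simp only [interF, List.zipWith_nil_right, List.flatten_nil, List.append_nil] at heq
    subst heq
    refine ⟨u ++ (x, b) :: (x, !b) :: v, [], rfl, by simp [interF], ?_, by simp⟩
    rw [mk_insert_pair u v x b]; exact he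
  | cons y ys ih =>
    intro fs e u v hlen heq he hfs
    obtain ⟨f, fs', rfl⟩ : ∃ f fs', fs = f :: fs' := by
      cases fs with
      | nil => simp at hlen
      | cons f fs' => exact ⟨f, fs', rfl⟩
    rw [interF_cons] at heq
    have hlen' : fs'.length = ys.length := by simpa using hlen
    have hf1 : FreeGroup.mk f = 1 := hfs f (by simp)
    have hfs' : ∀ g ∈ fs', FreeGroup.mk g = 1 := fun g hg => hfs g (by simp [hg])
    rcases List.append_eq_append_iff.mp heq with ⟨a', ha1, ha2⟩ | ⟨c', hc1, hc2⟩
    · -- u = e ++ a',  y :: (f ++ interF ys fs') = a' ++ v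
      cases a' with
      | nil =>
        -- u = e, v = y :: (f ++ interF ys fs')
        simp only [List.nil_append] at ha2
        refine ⟨e ++ [(x, b), (x, !b)], f :: fs', by simpa using hlen', ?_, ?_, hfs⟩
        · rw [interF_cons, ha1, ← ha2]
          simp
        · have h3 := mk_insert_pair e [] x b
          simp only [List.append_nil] at h3
          rw [show e ++ [(x, b), (x, !b)] = e ++ (x, b) :: (x, !b) :: [] by simp, h3]
          exact he
      | cons z a'' =>
        -- z = y, f ++ interF ys fs' = a'' ++ v
        simp only [List.cons_append, List.cons.injEq] at ha2
        obtain ⟨rfl, h2⟩ := ha2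
        obtain ⟨f', fs'', hl2, he2, hm2, hfs2⟩ := ih fs' f a'' v hlen' h2 hf1 hfs'
        refine ⟨e, f' :: fs'', by simpa using hl2, ?_, he, ?_⟩
        · rw [interF_cons, he2, ha1]
          simp
        · intro g hg
          rcases List.mem_cons.mp hg with rfl | hg'
          · exact hm2
          · exact hfs2 g hg'
    · -- e = u ++ c', v = c' ++ (y :: (f ++ interF ys fs'))
      refine ⟨u ++ (x, b) :: (x, !b) :: c', f :: fs', by simpa using hlen', ?_, ?_, hfs⟩
      · rw [interF_cons, hc2]
        simp
      · rw [mk_insert_pair u c' x b, ← hc1]; exact he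

end CoWP
end PartA
section PartB
namespace CoWP

open FreeGroup List

variable {X : Type}

lemma red_decomp {w r : List (Letter X)} (h : FreeGroup.Red w r) :
    ∃ e fs, fs.length = r.length ∧ w = e ++ interF r fs ∧
      FreeGroup.mk e = 1 ∧ ∀ f ∈ fs, FreeGroup.mk f = 1 := by
  induction h using Relation.ReflTransGen.head_induction_on with
  | refl =>
    refine ⟨[], List.replicate r.length [], by simp, by rw [interF_nil_fs]; rfl,
      FreeGroup.one_eq_mk.symm, fun f hf => ?_⟩
    rw [List.eq_of_mem_replicate hf]
    exact FreeGroup.one_eq_mk.symm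
  | head step _ ih =>
    obtain ⟨e, fs, hlen, heq, he, hfs⟩ := ih
    cases step with
    | @not L₁ L₂ x b =>
      obtain ⟨e', fs', h1, h2, h3, h4⟩ := insert_decomp x b r fs e L₁ L₂ hlen heq.symm he hfs
      exact ⟨e', fs', h1, h2.symm, h3, h4⟩

lemma mk_interF :
    ∀ (xs : List (Letter X)) (fs : List (List (Letter X))),
      fs.length = xs.length → (∀ f ∈ fs, FreeGroup.mk f = 1) →
      FreeGroup.mk (interF xs fs) = FreeGroup.mk xs := by
  intro xs
  induction xs with
  | nil => intro fs hlen _; rw [List.length_eq_zero_iff.mp hlen]; rfl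
  | cons y ys ih =>
    intro fs hlen hfs
    obtain ⟨f, fs', rfl⟩ : ∃ f fs', fs = f :: fs' := by
      cases fs with
      | nil => simp at hlen
      | cons f fs' => exact ⟨f, fs', rfl⟩
    rw [interF_cons]
    have h1 : FreeGroup.mk (y :: (f ++ interF ys fs')) =
        FreeGroup.mk [y] * FreeGroup.mk f * FreeGroup.mk (interF ys fs') := by
      rw [show y :: (f ++ interF ys fs') = [y] ++ f ++ interF ys fs' by simp,
        mk_append, mk_append]
    rw [h1, hfs f (by simp), ih fs' (by simpa using hlen) (fun g hg => hfs g (by simp [hg])),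
      mul_one, show y :: ys = [y] ++ ys by simp, mk_append]

inductive GenI {X : Type} : List (Letter X) → Prop
  | nil : GenI []
  | cons (a : Letter X) {e f : List (Letter X)} :
      GenI e → GenI f → GenI (a :: e ++ linv a :: f)

lemma GenI.mk_eq_one {w : List (Letter X)} (h : GenI w) : FreeGroup.mk w = 1 := by
  induction h with
  | nil => exact FreeGroup.one_eq_mk.symm
  | @cons a e f _ _ ihe ihf =>
    have hsplit : (a :: e ++ linv a :: f) = [a] ++ e ++ ([linv a] ++ f) := by simp
    rw [hsplit, mk_append, mk_append, mk_append, ihe, ihf, mul_one, mul_one,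
      ← mk_append]
    exact mk_pair a

lemma GenI.insert (a : Letter X) {w : List (Letter X)} (h : GenI w) :
    ∀ u v, w = u ++ v → GenI (u ++ a :: linv a :: v) := by
  induction h with
  | nil =>
    intro u v huv
    obtain ⟨rfl, rfl⟩ : u = [] ∧ v = [] := List.append_eq_nil_iff.mp huv.symm
    exact GenI.cons a GenI.nil GenI.nil
  | @cons b e f hge hgf ihe ihf =>
    intro u v huv
    cases u with
    | nil =>
      simp only [List.nil_append] at huv ⊢
      rw [← huv]
      exact GenI.cons a GenI.nil (GenI.cons b hge hgf)
    | cons c u' =>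
      rw [show (b :: e) ++ linv b :: f = b :: (e ++ linv b :: f) by simp,
        List.cons_append, List.cons.injEq] at huv
      obtain ⟨hbc, h2⟩ := huv
      subst hbc
      rcases List.append_eq_append_iff.mp h2.symm with ⟨w', hw1, hw2⟩ | ⟨w', hw1, hw2⟩
      · -- e = u' ++ w', v = w' ++ linv b :: f
        have hins := ihe u' w' hw1
        have hc := GenI.cons b hins hgf
        rw [hw2]
        simpa using hc
      · -- u' = e ++ w', linv b :: f = w' ++ v
        cases w' with
        | nil =>
          simp only [List.nil_append] at hw2
          simp only [List.append_nil] at hw1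
          have hins := ihe e [] (by simp)
          have hc := GenI.cons b hins hgf
          rw [hw1, ← hw2]
          simpa using hc
        | cons d w'' =>
          simp only [List.cons_append, List.cons.injEq] at hw2
          obtain ⟨rfl, rfl⟩ := hw2
          have hins := ihf w'' v rfl
          have hc := GenI.cons b hge hins
          rw [hw1]
          simpa using hc

end CoWP
end PartB
section PartC
namespace CoWP

open FreeGroup List

variable {X : Type}

lemma genI_of_mk_eq_one [DecidableEq X] {w : List (Letter X)}
    (h : FreeGroup.mk w = 1) : GenI w := by
  have hred : FreeGroup.reduce w = [] := by
    have := FreeGroup.reduce.sound (L₁ := w) (L₂ := []) (by rw [h]; exact FreeGroup.one_eq_mk)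
    simpa using this
  have hr : FreeGroup.Red w [] := hred ▸ FreeGroup.reduce.red
  clear h hred
  induction hr using Relation.ReflTransGen.head_induction_on with
  | refl => exact GenI.nil
  | head step _ ih =>
    cases step with
    | @not L₁ L₂ x b =>
      have := GenI.insert (x, b) ih L₁ L₂ rfl
      simpa [linv] using this

/-- Nonterminals of our grammar. -/
inductive NTx (X : Type) where
  | S : NTx X
  | I : NTx X
  | H : NTx X
  | P (a : Letter X) : NTx X
  | Q (a : Letter X) : NTx X
deriving DecidableEq

variable (X) in
abbrev Sym := Symbol (HSym X) (NTx X)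

def ι (a : Letter X) : Sym X := Symbol.terminal (Sum.inl a)
def hsh : Sym X := Symbol.terminal hashSym
def nt (n : NTx X) : Sym X := Symbol.nonterminal n

abbrev CRule (X : Type) := ContextFreeRule (HSym X) (NTx X)

def rI0 : CRule X := ⟨.I, []⟩
def rI (a : Letter X) : CRule X := ⟨.I, [ι a, nt .I, ι (linv a), nt .I]⟩
def rH0 : CRule X := ⟨.H, [hsh, nt .I]⟩
def rH1 (a : Letter X) : CRule X := ⟨.H, [ι a, nt .H, ι (linv a), nt .I]⟩
def rH2 (a : Letter X) : CRule X := ⟨.H, [ι a, nt .I, ι (linv a), nt .H]⟩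
def rS1 (a : Letter X) : CRule X := ⟨.S, [nt .I, ι a, nt (.P a)]⟩
def rS2 (a : Letter X) : CRule X := ⟨.S, [nt .H, ι a, nt (.Q a)]⟩
def rQ0 (a : Letter X) : CRule X := ⟨.Q a, [nt .I]⟩
def rQ1 (a x : Letter X) : CRule X := ⟨.Q a, [nt .I, ι x, nt (.Q x)]⟩
def rP0 (a : Letter X) : CRule X := ⟨.P a, [nt .H]⟩
def rP1 (a x : Letter X) : CRule X := ⟨.P a, [nt .H, ι x, nt (.Q x)]⟩
def rP2 (a x : Letter X) : CRule X := ⟨.P a, [nt .I, ι x, nt (.P x)]⟩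

variable (X) in
/-- The list of letters. -/
noncomputable def letters [Fintype X] : List (Letter X) := (Finset.univ : Finset (Letter X)).toList

lemma mem_letters [Fintype X] (a : Letter X) : a ∈ letters X :=
  Finset.mem_toList.mpr (Finset.mem_univ a)

variable (X) in
noncomputable def ruleList [Fintype X] [DecidableEq X] : List (CRule X) :=
  [rI0, rH0]
    ++ (letters X).map rI
    ++ (letters X).map rH1
    ++ (letters X).map rH2
    ++ (letters X).map rS1
    ++ (letters X).map rS2
    ++ (letters X).map rQ0
    ++ (letters X).map rP0
    ++ ((letters X).flatMap fun a =>
        ((letters X).filter fun x => x ≠ linv a).map (rQ1 a))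
    ++ ((letters X).flatMap fun a =>
        ((letters X).filter fun x => x ≠ linv a).map (rP1 a))
    ++ ((letters X).flatMap fun a =>
        ((letters X).filter fun x => x ≠ linv a).map (rP2 a))

variable (X) in
noncomputable abbrev gr [Fintype X] [DecidableEq X] : ContextFreeGrammar (HSym X) :=
  ⟨NTx X, .S, (ruleList X).toFinset⟩

section Mem
variable [Fintype X] [DecidableEq X]

lemma mem_rules_of_mem_ruleList {r : CRule X} (h : r ∈ ruleList X) : r ∈ (gr X).rules :=
  List.mem_toFinset.mpr h

lemma hrI0 : rI0 ∈ (gr X).rules := mem_rules_of_mem_ruleList (by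
  unfold ruleList
  apply List.mem_append_left
  apply List.mem_append_left
  apply List.mem_append_left
  apply List.mem_append_left
  apply List.mem_append_left
  apply List.mem_append_left
  apply List.mem_append_left
  apply List.mem_append_left
  apply List.mem_append_left
  apply List.mem_append_left
  exact List.mem_cons_self)

lemma hrH0 : rH0 ∈ (gr X).rules := mem_rules_of_mem_ruleList (by
  unfold ruleList
  apply List.mem_append_left
  apply List.mem_append_left
  apply List.mem_append_left
  apply List.mem_append_left
  apply List.mem_append_left
  apply List.mem_append_left
  apply List.mem_append_left
  apply List.mem_append_left
  apply List.mem_append_left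
  apply List.mem_append_left
  simp)

lemma hrI (a : Letter X) : rI a ∈ (gr X).rules := mem_rules_of_mem_ruleList (by
  unfold ruleList
  apply List.mem_append_left
  apply List.mem_append_left
  apply List.mem_append_left
  apply List.mem_append_left
  apply List.mem_append_left
  apply List.mem_append_left
  apply List.mem_append_left
  apply List.mem_append_left
  apply List.mem_append_left
  apply List.mem_append_right
  exact List.mem_map_of_mem (mem_letters a))

lemma hrH1 (a : Letter X) : rH1 a ∈ (gr X).rules := mem_rules_of_mem_ruleList (by
  unfold ruleList
  apply List.mem_append_left
  apply List.mem_append_left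
  apply List.mem_append_left
  apply List.mem_append_left
  apply List.mem_append_left
  apply List.mem_append_left
  apply List.mem_append_left
  apply List.mem_append_left
  apply List.mem_append_right
  exact List.mem_map_of_mem (mem_letters a))

lemma hrH2 (a : Letter X) : rH2 a ∈ (gr X).rules := mem_rules_of_mem_ruleList (by
  unfold ruleList
  apply List.mem_append_left
  apply List.mem_append_left
  apply List.mem_append_left
  apply List.mem_append_left
  apply List.mem_append_left
  apply List.mem_append_left
  apply List.mem_append_left
  apply List.mem_append_right
  exact List.mem_map_of_mem (mem_letters a))

lemma hrS1 (a : Letter X) : rS1 a ∈ (gr X).rules := mem_rules_of_mem_ruleList (by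
  unfold ruleList
  apply List.mem_append_left
  apply List.mem_append_left
  apply List.mem_append_left
  apply List.mem_append_left
  apply List.mem_append_left
  apply List.mem_append_left
  apply List.mem_append_right
  exact List.mem_map_of_mem (mem_letters a))

lemma hrS2 (a : Letter X) : rS2 a ∈ (gr X).rules := mem_rules_of_mem_ruleList (by
  unfold ruleList
  apply List.mem_append_left
  apply List.mem_append_left
  apply List.mem_append_left
  apply List.mem_append_left
  apply List.mem_append_left
  apply List.mem_append_right
  exact List.mem_map_of_mem (mem_letters a))

lemma hrQ0 (a : Letter X) : rQ0 a ∈ (gr X).rules := mem_rules_of_mem_ruleList (by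
  unfold ruleList
  apply List.mem_append_left
  apply List.mem_append_left
  apply List.mem_append_left
  apply List.mem_append_left
  apply List.mem_append_right
  exact List.mem_map_of_mem (mem_letters a))

lemma hrP0 (a : Letter X) : rP0 a ∈ (gr X).rules := mem_rules_of_mem_ruleList (by
  unfold ruleList
  apply List.mem_append_left
  apply List.mem_append_left
  apply List.mem_append_left
  apply List.mem_append_right
  exact List.mem_map_of_mem (mem_letters a))

lemma hrQ1 (a x : Letter X) (hx : x ≠ linv a) : rQ1 a x ∈ (gr X).rules := mem_rules_of_mem_ruleList (by
  unfold ruleList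
  apply List.mem_append_left
  apply List.mem_append_left
  apply List.mem_append_right
  exact List.mem_flatMap.mpr ⟨a, mem_letters a,
    List.mem_map_of_mem (List.mem_filter.mpr ⟨mem_letters x, by simpa using hx⟩)⟩)

lemma hrP1 (a x : Letter X) (hx : x ≠ linv a) : rP1 a x ∈ (gr X).rules := mem_rules_of_mem_ruleList (by
  unfold ruleList
  apply List.mem_append_left
  apply List.mem_append_right
  exact List.mem_flatMap.mpr ⟨a, mem_letters a,
    List.mem_map_of_mem (List.mem_filter.mpr ⟨mem_letters x, by simpa using hx⟩)⟩)

lemma hrP2 (a x : Letter X) (hx : x ≠ linv a) : rP2 a x ∈ (gr X).rules := mem_rules_of_mem_ruleList (by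
  unfold ruleList
  apply List.mem_append_right
  exact List.mem_flatMap.mpr ⟨a, mem_letters a,
    List.mem_map_of_mem (List.mem_filter.mpr ⟨mem_letters x, by simpa using hx⟩)⟩)

/-- Case analysis on rules. -/
lemma rules_cases {r : CRule X} (h : r ∈ (gr X).rules) :
    r = rI0 ∨ r = rH0 ∨ (∃ a, r = rI a) ∨ (∃ a, r = rH1 a) ∨ (∃ a, r = rH2 a) ∨
    (∃ a, r = rS1 a) ∨ (∃ a, r = rS2 a) ∨ (∃ a, r = rQ0 a) ∨ (∃ a, r = rP0 a) ∨
    (∃ a x, x ≠ linv a ∧ r = rQ1 a x) ∨ (∃ a x, x ≠ linv a ∧ r = rP1 a x) ∨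
    (∃ a x, x ≠ linv a ∧ r = rP2 a x) := by
  have h' := List.mem_toFinset.mp h
  simp only [ruleList, List.mem_append, List.mem_map, List.mem_flatMap, List.mem_filter,
    List.mem_cons, List.not_mem_nil, or_false, List.mem_singleton] at h'
  rcases h' with ((((((((((h'|h')|h')|h')|h')|h')|h')|h')|h')|h')|h')|h'
  · exact Or.inl h'
  · exact Or.inr (Or.inl h')
  · obtain ⟨a, _, rfl⟩ := h'; exact Or.inr (Or.inr (Or.inl ⟨a, rfl⟩))
  · obtain ⟨a, _, rfl⟩ := h'
    exact Or.inr (Or.inr (Or.inr (Or.inl ⟨a, rfl⟩)))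
  · obtain ⟨a, _, rfl⟩ := h'
    exact Or.inr (Or.inr (Or.inr (Or.inr (Or.inl ⟨a, rfl⟩))))
  · obtain ⟨a, _, rfl⟩ := h'
    exact Or.inr (Or.inr (Or.inr (Or.inr (Or.inr (Or.inl ⟨a, rfl⟩)))))
  · obtain ⟨a, _, rfl⟩ := h'
    exact Or.inr (Or.inr (Or.inr (Or.inr (Or.inr (Or.inr (Or.inl ⟨a, rfl⟩))))))
  · obtain ⟨a, _, rfl⟩ := h'
    exact Or.inr (Or.inr (Or.inr (Or.inr (Or.inr (Or.inr (Or.inr (Or.inl ⟨a, rfl⟩)))))))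
  · obtain ⟨a, _, rfl⟩ := h'
    exact Or.inr (Or.inr (Or.inr (Or.inr (Or.inr (Or.inr (Or.inr (Or.inr (Or.inl ⟨a, rfl⟩))))))))
  · obtain ⟨a, _, x, ⟨_, hx⟩, rfl⟩ := h'
    exact Or.inr (Or.inr (Or.inr (Or.inr (Or.inr (Or.inr (Or.inr (Or.inr (Or.inr (Or.inl
      ⟨a, x, by simpa using hx, rfl⟩)))))))))
  · obtain ⟨a, _, x, ⟨_, hx⟩, rfl⟩ := h'
    exact Or.inr (Or.inr (Or.inr (Or.inr (Or.inr (Or.inr (Or.inr (Or.inr (Or.inr (Or.inr (Or.inl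
      ⟨a, x, by simpa using hx, rfl⟩))))))))))
  · obtain ⟨a, _, x, ⟨_, hx⟩, rfl⟩ := h'
    exact Or.inr (Or.inr (Or.inr (Or.inr (Or.inr (Or.inr (Or.inr (Or.inr (Or.inr (Or.inr (Or.inr
      ⟨a, x, by simpa using hx, rfl⟩))))))))))

end Mem
end CoWP
end PartC
section PartD
namespace CoWP

open FreeGroup List

variable {X : Type}

lemma mk_conj (a : Letter X) {e f : List (Letter X)}
    (he : FreeGroup.mk e = 1) (hf : FreeGroup.mk f = 1) :
    FreeGroup.mk (a :: e ++ linv a :: f) = 1 := by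
  have hsplit : (a :: e ++ linv a :: f) = [a] ++ e ++ ([linv a] ++ f) := by simp
  rw [hsplit, mk_append, mk_append, mk_append, he, hf, mul_one, mul_one, ← mk_append]
  exact mk_pair a

lemma not_reduced_pair (L₁ L₂ : List (Letter X)) (x : X) (b : Bool) :
    ¬ Reduced (L₁ ++ (x, b) :: (x, !b) :: L₂) := by
  intro h
  have hinf : [(x, b), (x, !b)] <:+: L₁ ++ (x, b) :: (x, !b) :: L₂ := ⟨L₁, L₂, by simp⟩
  have := List.IsChain.infix h hinf
  rw [List.isChain_cons_cons] at this
  exact this.1 rfl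

lemma reduced_ne_one [DecidableEq X] {r : List (Letter X)} (h : Reduced r) (hne : r ≠ []) :
    FreeGroup.mk r ≠ 1 := by
  intro hmk
  have hred : FreeGroup.reduce r = [] := by
    have := FreeGroup.reduce.sound (L₁ := r) (L₂ := [])
      (by rw [hmk]; exact FreeGroup.one_eq_mk)
    simpa using this
  have hr : FreeGroup.Red r [] := hred ▸ FreeGroup.reduce.red
  rcases Relation.ReflTransGen.cases_head hr with h0 | ⟨c, hstep, _⟩
  · exact hne h0
  · cases hstep with
    | @not L₁ L₂ x b => exact not_reduced_pair L₁ L₂ x b h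

lemma mk_full (e₀ : List (Letter X)) (xs : List (Letter X)) (fs : List (List (Letter X)))
    (he : FreeGroup.mk e₀ = 1) (hlen : fs.length = xs.length)
    (hfs : ∀ f ∈ fs, FreeGroup.mk f = 1) :
    FreeGroup.mk (e₀ ++ interF xs fs) = FreeGroup.mk xs := by
  rw [mk_append, he, one_mul, mk_interF xs fs hlen hfs]

def SemI : Language (HSym X) :=
  { w | ∃ s : List (Letter X), w = s.map Sum.inl ∧ FreeGroup.mk s = 1 }

def SemH : Language (HSym X) :=
  { w | ∃ s t : List (Letter X),
      w = s.map Sum.inl ++ hashSym :: t.map Sum.inl ∧ FreeGroup.mk (s ++ t) = 1 }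

def SemQ (a : Letter X) : Language (HSym X) :=
  { w | ∃ e xs fs, w = (e ++ interF xs fs).map Sum.inl ∧ fs.length = xs.length ∧
      FreeGroup.mk e = 1 ∧ (∀ f ∈ fs, FreeGroup.mk f = 1) ∧ Reduced (a :: xs) }

def SemP (a : Letter X) : Language (HSym X) :=
  { w | ∃ s t e xs fs, w = s.map Sum.inl ++ hashSym :: t.map Sum.inl ∧
      s ++ t = e ++ interF xs fs ∧ fs.length = xs.length ∧
      FreeGroup.mk e = 1 ∧ (∀ f ∈ fs, FreeGroup.mk f = 1) ∧ Reduced (a :: xs) }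

def SemS : Language (HSym X) :=
  { w | ∃ s t : List (Letter X),
      w = s.map Sum.inl ++ hashSym :: t.map Sum.inl ∧ FreeGroup.mk (s ++ t) ≠ 1 }

def Sem : NTx X → Language (HSym X)
  | .S => SemS
  | .I => SemI
  | .H => SemH
  | .P a => SemP a
  | .Q a => SemQ a

def semSym : Sym X → Language (HSym X)
  | .terminal t => {[t]}
  | .nonterminal n => Sem n

def semL (l : List (Sym X)) : Language (HSym X) := (l.map semSym).prod

@[simp] lemma semSym_terminal (t : HSym X) : semSym (Symbol.terminal t) = {[t]} := rfl
@[simp] lemma semSym_nonterminal (n : NTx X) : semSym (Symbol.nonterminal n) = Sem n := rfl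
@[simp] lemma semSym_iota (a : Letter X) : semSym (ι a) = {[Sum.inl a]} := rfl
@[simp] lemma semSym_hsh : semSym (hsh : Sym X) = {[hashSym]} := rfl
@[simp] lemma semSym_nt (n : NTx X) : semSym (nt n) = Sem n := rfl

lemma semL_append (u v : List (Sym X)) : semL (u ++ v) = semL u * semL v := by
  simp [semL]

@[simp] lemma semL_nil : semL ([] : List (Sym X)) = 1 := rfl

@[simp] lemma semL_cons (s : Sym X) (l : List (Sym X)) :
    semL (s :: l) = semSym s * semL l := by
  simp [semL]

lemma semL_nt (n : NTx X) : semL [nt n] = Sem n := by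
  simp

lemma mem_semL_self (w : List (HSym X)) : w ∈ semL (w.map Symbol.terminal) := by
  induction w with
  | nil => exact Language.nil_mem_one
  | cons t rest ih =>
    have := Language.append_mem_mul (l := {[t]}) (m := semL (rest.map Symbol.terminal))
      rfl ih
    simpa using this

@[simp] lemma rI0_input : (rI0 : CRule X).input = NTx.I := rfl
@[simp] lemma rI0_output : (rI0 : CRule X).output = ([] : List (Sym X)) := rfl
@[simp] lemma rH0_input : (rH0 : CRule X).input = NTx.H := rfl
@[simp] lemma rH0_output : (rH0 : CRule X).output = [hsh, nt .I] := rfl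
@[simp] lemma rI_input (a : Letter X) : (rI a : CRule X).input = NTx.I := rfl
@[simp] lemma rI_output (a : Letter X) : (rI a : CRule X).output = [ι a, nt .I, ι (linv a), nt .I] := rfl
@[simp] lemma rH1_input (a : Letter X) : (rH1 a : CRule X).input = NTx.H := rfl
@[simp] lemma rH1_output (a : Letter X) : (rH1 a : CRule X).output = [ι a, nt .H, ι (linv a), nt .I] := rfl
@[simp] lemma rH2_input (a : Letter X) : (rH2 a : CRule X).input = NTx.H := rfl
@[simp] lemma rH2_output (a : Letter X) : (rH2 a : CRule X).output = [ι a, nt .I, ι (linv a), nt .H] := rfl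
@[simp] lemma rS1_input (a : Letter X) : (rS1 a : CRule X).input = NTx.S := rfl
@[simp] lemma rS1_output (a : Letter X) : (rS1 a : CRule X).output = [nt .I, ι a, nt (.P a)] := rfl
@[simp] lemma rS2_input (a : Letter X) : (rS2 a : CRule X).input = NTx.S := rfl
@[simp] lemma rS2_output (a : Letter X) : (rS2 a : CRule X).output = [nt .H, ι a, nt (.Q a)] := rfl
@[simp] lemma rQ0_input (a : Letter X) : (rQ0 a : CRule X).input = NTx.Q a := rfl
@[simp] lemma rQ0_output (a : Letter X) : (rQ0 a : CRule X).output = [nt .I] := rfl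
@[simp] lemma rQ1_input (a x : Letter X) : (rQ1 a x : CRule X).input = NTx.Q a := rfl
@[simp] lemma rQ1_output (a x : Letter X) : (rQ1 a x : CRule X).output = [nt .I, ι x, nt (.Q x)] := rfl
@[simp] lemma rP0_input (a : Letter X) : (rP0 a : CRule X).input = NTx.P a := rfl
@[simp] lemma rP0_output (a : Letter X) : (rP0 a : CRule X).output = [nt .H] := rfl
@[simp] lemma rP1_input (a x : Letter X) : (rP1 a x : CRule X).input = NTx.P a := rfl
@[simp] lemma rP1_output (a x : Letter X) : (rP1 a x : CRule X).output = [nt .H, ι x, nt (.Q x)] := rfl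
@[simp] lemma rP2_input (a x : Letter X) : (rP2 a x : CRule X).input = NTx.P a := rfl
@[simp] lemma rP2_output (a x : Letter X) : (rP2 a x : CRule X).output = [nt .I, ι x, nt (.P x)] := rfl

section Incl
variable [Fintype X] [DecidableEq X]

@[simp] lemma Sem_S : Sem (NTx.S : NTx X) = SemS := rfl
@[simp] lemma Sem_I : Sem (NTx.I : NTx X) = SemI := rfl
@[simp] lemma Sem_H : Sem (NTx.H : NTx X) = SemH := rfl
@[simp] lemma Sem_P (a : Letter X) : Sem (NTx.P a) = SemP a := rfl
@[simp] lemma Sem_Q (a : Letter X) : Sem (NTx.Q a) = SemQ a := rfl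

lemma mem_SemI {w : List (HSym X)} :
    w ∈ SemI ↔ ∃ s : List (Letter X), w = s.map Sum.inl ∧ FreeGroup.mk s = 1 := Iff.rfl
lemma mem_SemH {w : List (HSym X)} :
    w ∈ SemH ↔ ∃ s t : List (Letter X),
      w = s.map Sum.inl ++ hashSym :: t.map Sum.inl ∧ FreeGroup.mk (s ++ t) = 1 := Iff.rfl
lemma mem_SemQ {a : Letter X} {w : List (HSym X)} :
    w ∈ SemQ a ↔ ∃ e xs fs, w = (e ++ interF xs fs).map Sum.inl ∧ fs.length = xs.length ∧
      FreeGroup.mk e = 1 ∧ (∀ f ∈ fs, FreeGroup.mk f = 1) ∧ Reduced (a :: xs) := Iff.rfl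
lemma mem_SemP {a : Letter X} {w : List (HSym X)} :
    w ∈ SemP a ↔ ∃ s t e xs fs, w = s.map Sum.inl ++ hashSym :: t.map Sum.inl ∧
      s ++ t = e ++ interF xs fs ∧ fs.length = xs.length ∧
      FreeGroup.mk e = 1 ∧ (∀ f ∈ fs, FreeGroup.mk f = 1) ∧ Reduced (a :: xs) := Iff.rfl
lemma mem_SemS {w : List (HSym X)} :
    w ∈ SemS ↔ ∃ s t : List (Letter X),
      w = s.map Sum.inl ++ hashSym :: t.map Sum.inl ∧ FreeGroup.mk (s ++ t) ≠ 1 := Iff.rfl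

lemma cons_all_one {e : List (Letter X)} {fs : List (List (Letter X))}
    (he : FreeGroup.mk e = 1) (hfs : ∀ f ∈ fs, FreeGroup.mk f = 1) :
    ∀ f ∈ e :: fs, FreeGroup.mk f = 1 := by
  intro f hf
  rcases List.mem_cons.mp hf with rfl | hf'
  · exact he
  · exact hfs f hf'

lemma reduced_cons {a x : Letter X} {xs : List (Letter X)} (hx : x ≠ linv a)
    (h : Reduced (x :: xs)) : Reduced (a :: x :: xs) := by
  rw [Reduced, show @List.Chain' = @List.IsChain from rfl, List.isChain_cons_cons]
  exact ⟨hx, h⟩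

lemma rule_incl : ∀ r ∈ (gr X).rules, semL r.output ≤ Sem r.input := by
  intro r hr
  rcases rules_cases hr with h | h | ⟨a, h⟩ | ⟨a, h⟩ | ⟨a, h⟩ | ⟨a, h⟩ | ⟨a, h⟩ | ⟨a, h⟩ |
    ⟨a, h⟩ | ⟨a, x, hx, h⟩ | ⟨a, x, hx, h⟩ | ⟨a, x, hx, h⟩ <;> subst h <;> intro w hw <;>
    simp only [rI0_output, rH0_output, rI_output, rH1_output, rH2_output, rS1_output,
      rS2_output, rQ0_output, rP0_output, rQ1_output, rP1_output, rP2_output,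
      semL_cons, semL_nil, semSym_iota, semSym_hsh, semSym_nt, Sem_S, Sem_I, Sem_H,
      Sem_P, Sem_Q, mul_one, Language.mem_mul, Set.mem_singleton_iff,
      mem_SemI, mem_SemH, mem_SemP, mem_SemQ, Language.mem_one,
      rI0_input, rH0_input, rI_input, rH1_input, rH2_input, rS1_input,
      rS2_input, rQ0_input, rP0_input, rQ1_input, rP1_input, rP2_input] at hw ⊢
  · -- rI0
    replace hw : w = [] := hw
    exact ⟨[], by simp [hw], FreeGroup.one_eq_mk.symm⟩
  · -- rH0
    obtain ⟨w1, rfl, _, ⟨s, rfl, hs⟩, rfl⟩ := hw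
    exact ⟨[], s, by simp, by simpa using hs⟩
  · -- rI a
    obtain ⟨w1, rfl, _, ⟨_, ⟨s1, rfl, hs1⟩, _, ⟨_, rfl, _, ⟨s2, rfl, hs2⟩, rfl⟩, rfl⟩, rfl⟩ := hw
    exact ⟨a :: s1 ++ linv a :: s2, by simp, mk_conj a hs1 hs2⟩
  · -- rH1 a
    obtain ⟨w1, rfl, _, ⟨_, ⟨s, t, rfl, hst⟩, _, ⟨_, rfl, _, ⟨u, rfl, hu⟩, rfl⟩, rfl⟩, rfl⟩ := hw
    refine ⟨a :: s, t ++ linv a :: u, by simp, ?_⟩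
    rw [show (a :: s) ++ (t ++ linv a :: u) = a :: (s ++ t) ++ linv a :: u by simp]
    exact mk_conj a hst hu
  · -- rH2 a
    obtain ⟨w1, rfl, _, ⟨_, ⟨s1, rfl, hs1⟩, _, ⟨_, rfl, _, ⟨s, t, rfl, hst⟩, rfl⟩, rfl⟩, rfl⟩ := hw
    refine ⟨a :: s1 ++ linv a :: s, t, by simp, ?_⟩
    rw [show (a :: s1 ++ linv a :: s) ++ t = a :: s1 ++ linv a :: (s ++ t) by simp]
    exact mk_conj a hs1 hst
  · -- rS1 a
    obtain ⟨_, ⟨e1, rfl, he1⟩, _, ⟨_, rfl, _,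
      ⟨s, t, e, xs, fs, rfl, hsplit, hlen, he, hfs, hch⟩, rfl⟩, rfl⟩ := hw
    refine ⟨e1 ++ a :: s, t, by simp, ?_⟩
    rw [show (e1 ++ a :: s) ++ t = e1 ++ interF (a :: xs) (e :: fs) by
      rw [interF_cons]; simp [hsplit]]
    rw [mk_full e1 (a :: xs) (e :: fs) he1 (by simpa using hlen) (cons_all_one he hfs)]
    exact reduced_ne_one hch (by simp)
  · -- rS2 a
    obtain ⟨_, ⟨s, t, rfl, hst⟩, _, ⟨_, rfl, _,
      ⟨e, xs, fs, rfl, hlen, he, hfs, hch⟩, rfl⟩, rfl⟩ := hw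
    refine ⟨s, t ++ a :: (e ++ interF xs fs), by simp, ?_⟩
    rw [show s ++ (t ++ a :: (e ++ interF xs fs)) = (s ++ t) ++ interF (a :: xs) (e :: fs) by
      rw [interF_cons]; simp]
    rw [mk_full (s ++ t) (a :: xs) (e :: fs) hst (by simpa using hlen) (cons_all_one he hfs)]
    exact reduced_ne_one hch (by simp)
  · -- rQ0 a
    obtain ⟨s, rfl, hs⟩ := hw
    exact ⟨s, [], [], by simp [interF], rfl, hs, by simp, List.isChain_singleton a⟩
  · -- rP0 a
    obtain ⟨s, t, rfl, hst⟩ := hw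
    exact ⟨s, t, s ++ t, [], [], rfl, by simp [interF], rfl, hst, by simp,
      List.isChain_singleton a⟩
  · -- rQ1 a x
    obtain ⟨_, ⟨e1, rfl, he1⟩, _, ⟨_, rfl, _,
      ⟨e, xs, fs, rfl, hlen, he, hfs, hch⟩, rfl⟩, rfl⟩ := hw
    refine ⟨e1, x :: xs, e :: fs, ?_, by simpa using hlen, he1,
      cons_all_one he hfs, reduced_cons hx hch⟩
    rw [interF_cons]; simp
  · -- rP1 a x
    obtain ⟨_, ⟨s, t, rfl, hst⟩, _, ⟨_, rfl, _,
      ⟨e, xs, fs, rfl, hlen, he, hfs, hch⟩, rfl⟩, rfl⟩ := hw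
    refine ⟨s, t ++ x :: (e ++ interF xs fs), s ++ t, x :: xs, e :: fs, by simp, ?_,
      by simpa using hlen, hst, cons_all_one he hfs, reduced_cons hx hch⟩
    rw [interF_cons]; simp
  · -- rP2 a x
    obtain ⟨_, ⟨e1, rfl, he1⟩, _, ⟨_, rfl, _,
      ⟨s, t, e, xs, fs, rfl, hsplit, hlen, he, hfs, hch⟩, rfl⟩, rfl⟩ := hw
    refine ⟨e1 ++ x :: s, t, e1, x :: xs, e :: fs, by simp, ?_, by simpa using hlen, he1,
      cons_all_one he hfs, reduced_cons hx hch⟩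
    rw [interF_cons]; simp [hsplit]

end Incl
end CoWP
end PartD
section PartE
namespace CoWP

open FreeGroup List ContextFreeGrammar

variable {X : Type} [Fintype X] [DecidableEq X]

lemma produces_sound {α β : List (Sym X)} (h : (gr X).Produces α β) : semL β ≤ semL α := by
  obtain ⟨r, hr, hrw⟩ := h
  obtain ⟨p, q, rfl, rfl⟩ := hrw.exists_parts
  intro w hw
  rw [semL_append, semL_append] at hw ⊢
  erw [Language.mem_mul] at hw ⊢
  obtain ⟨w1, hw1, w3, hw3, rfl⟩ := hw
  rw [Language.mem_mul] at hw1
  obtain ⟨wp, hwp, wo, hwo, rfl⟩ := hw1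
  have hmid : wo ∈ semL [Symbol.nonterminal r.input] := by
    rw [show (Symbol.nonterminal r.input : Sym X) = nt r.input from rfl, semL_nt]
    exact rule_incl r hr hwo
  exact ⟨wp ++ wo, Language.append_mem_mul hwp hmid, w3, hw3, rfl⟩

lemma derives_sound {α β : List (Sym X)} (h : (gr X).Derives α β) : semL β ≤ semL α := by
  induction h with
  | refl => exact le_refl _
  | tail _ hp ih => exact le_trans (produces_sound hp) ih

lemma lang_sound {w : List (HSym X)} (h : w ∈ (gr X).language) : w ∈ (SemS : Language (HSym X)) := by
  have h2 := derives_sound h (mem_semL_self w)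
  rw [show (Symbol.nonterminal (gr X).initial : Sym X) = nt NTx.S from rfl, semL_nt] at h2
  exact h2

/-- Terminal word made of letters. -/
def TW (s : List (Letter X)) : List (Sym X) :=
  s.map fun a => Symbol.terminal (Sum.inl a)

@[simp] lemma TW_nil : TW ([] : List (Letter X)) = [] := rfl
@[simp] lemma TW_cons (a : Letter X) (s : List (Letter X)) :
    TW (a :: s) = Symbol.terminal (Sum.inl a) :: TW s := rfl
@[simp] lemma TW_append (s t : List (Letter X)) : TW (s ++ t) = TW s ++ TW t := by
  simp [TW]

lemma der_rule {n : NTx X} {r : CRule X} (hr : r ∈ (gr X).rules) (hin : r.input = n) :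
    (gr X).Derives [Symbol.nonterminal n] r.output := by
  subst hin
  exact Produces.single ⟨r, hr, ContextFreeRule.Rewrites.input_output⟩

lemma der_app {l₁ l₂ w₁ w₂ : List (Sym X)} (h1 : (gr X).Derives l₁ w₁)
    (h2 : (gr X).Derives l₂ w₂) : (gr X).Derives (l₁ ++ l₂) (w₁ ++ w₂) :=
  (h1.append_right l₂).trans (h2.append_left w₁)

lemma derI {s : List (Letter X)} (h : GenI s) :
    (gr X).Derives [nt NTx.I] (TW s) := by
  induction h with
  | nil => exact der_rule hrI0 rfl
  | @cons a e f hge hgf ihe ihf =>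
    have h1 : (gr X).Derives ((([ι a] ++ [nt NTx.I]) ++ [ι (linv a)]) ++ [nt NTx.I])
        ((([ι a] ++ TW e) ++ [ι (linv a)]) ++ TW f) :=
      der_app (der_app (der_app (Derives.refl _) ihe) (Derives.refl _)) ihf
    have h2 := (der_rule (hrI a) rfl).trans h1
    simpa [ι, nt] using h2

lemma derH {w : List (Letter X)} (h : GenI w) :
    ∀ u v, w = u ++ v →
      (gr X).Derives [nt NTx.H] (TW u ++ hsh :: TW v) := by
  induction h with
  | nil =>
    intro u v huv
    obtain ⟨rfl, rfl⟩ : u = [] ∧ v = [] := List.append_eq_nil_iff.mp huv.symm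
    have h1 : (gr X).Derives ([hsh] ++ [nt NTx.I]) ([hsh] ++ ([] : List (Sym X))) :=
      der_app (Derives.refl _) (der_rule hrI0 rfl)
    have h2 := (der_rule hrH0 rfl).trans h1
    simpa [nt] using h2
  | @cons a e f hge hgf ihe ihf =>
    intro u v huv
    cases u with
    | nil =>
      simp only [List.nil_append] at huv
      have h1 : (gr X).Derives ([hsh] ++ [nt NTx.I]) ([hsh] ++ TW (a :: e ++ linv a :: f)) :=
        der_app (Derives.refl _) (derI (GenI.cons a hge hgf))
      have h2 := (der_rule hrH0 rfl).trans h1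
      rw [← huv]
      simpa [nt] using h2
    | cons c u' =>
      rw [show (a :: e) ++ linv a :: f = a :: (e ++ linv a :: f) by simp,
        List.cons_append, List.cons.injEq] at huv
      obtain ⟨hac, h2⟩ := huv
      subst hac
      rcases List.append_eq_append_iff.mp h2.symm with ⟨w', hw1, hw2⟩ | ⟨w', hw1, hw2⟩
      · -- e = u' ++ w', v = w' ++ linv a :: f   (hash inside e)
        have h1 : (gr X).Derives
            ((([ι a] ++ [nt NTx.H]) ++ [ι (linv a)]) ++ [nt NTx.I])
            ((([ι a] ++ (TW u' ++ hsh :: TW w')) ++ [ι (linv a)]) ++ TW f) :=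
          der_app (der_app (der_app (Derives.refl _) (ihe u' w' hw1)) (Derives.refl _))
            (derI hgf)
        have h3 := (der_rule (hrH1 a) rfl).trans h1
        rw [hw2]
        simpa [ι, nt] using h3
      · -- u' = e ++ w', linv a :: f = w' ++ v
        cases w' with
        | nil =>
          simp only [List.nil_append] at hw2
          simp only [List.append_nil] at hw1
          have h1 : (gr X).Derives
              ((([ι a] ++ [nt NTx.H]) ++ [ι (linv a)]) ++ [nt NTx.I])
              ((([ι a] ++ (TW e ++ hsh :: TW [])) ++ [ι (linv a)]) ++ TW f) :=
            der_app (der_app (der_app (Derives.refl _) (ihe e [] (by simp))) (Derives.refl _))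
              (derI hgf)
          have h3 := (der_rule (hrH1 a) rfl).trans h1
          rw [hw1, ← hw2]
          simpa [ι, nt] using h3
        | cons d w'' =>
          simp only [List.cons_append, List.cons.injEq] at hw2
          obtain ⟨rfl, rfl⟩ := hw2
          have h1 : (gr X).Derives
              ((([ι a] ++ [nt NTx.I]) ++ [ι (linv a)]) ++ [nt NTx.H])
              ((([ι a] ++ TW e) ++ [ι (linv a)]) ++ (TW w'' ++ hsh :: TW v)) :=
            der_app (der_app (der_app (Derives.refl _) (derI hge)) (Derives.refl _))
              (ihf w'' v rfl)
          have h3 := (der_rule (hrH2 a) rfl).trans h1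
          rw [hw1]
          simpa [ι, nt] using h3

lemma derQ :
    ∀ (xs : List (Letter X)) (fs : List (List (Letter X))) (e : List (Letter X)) (a : Letter X),
      fs.length = xs.length → FreeGroup.mk e = 1 → (∀ f ∈ fs, FreeGroup.mk f = 1) →
      Reduced (a :: xs) →
      (gr X).Derives [nt (NTx.Q a)] (TW (e ++ interF xs fs)) := by
  intro xs
  induction xs with
  | nil =>
    intro fs e a hlen he _ _
    rw [List.length_eq_zero_iff.mp hlen]
    have h2 := (der_rule (hrQ0 a) rfl).trans (derI (genI_of_mk_eq_one he))
    simpa [interF, nt] using h2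
  | cons x xs' ih =>
    intro fs e a hlen he hfs hch
    obtain ⟨f, fs', rfl⟩ : ∃ f fs', fs = f :: fs' := by
      cases fs with
      | nil => simp at hlen
      | cons f fs' => exact ⟨f, fs', rfl⟩
    rw [Reduced, show @List.Chain' = @List.IsChain from rfl, List.isChain_cons_cons] at hch
    obtain ⟨hx, hch'⟩ := hch
    have h1 : (gr X).Derives (([nt NTx.I] ++ [ι x]) ++ [nt (NTx.Q x)])
        ((TW e ++ [ι x]) ++ TW (f ++ interF xs' fs')) :=
      der_app (der_app (derI (genI_of_mk_eq_one he)) (Derives.refl _))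
        (ih fs' f x (by simpa using hlen) (hfs f (by simp))
          (fun g hg => hfs g (by simp [hg])) hch')
    have h2 := (der_rule (hrQ1 a x hx) rfl).trans h1
    rw [interF_cons]
    simpa [ι, nt] using h2

lemma derP :
    ∀ (xs : List (Letter X)) (fs : List (List (Letter X))) (e u v : List (Letter X))
      (a : Letter X),
      u ++ v = e ++ interF xs fs → fs.length = xs.length →
      FreeGroup.mk e = 1 → (∀ f ∈ fs, FreeGroup.mk f = 1) → Reduced (a :: xs) →
      (gr X).Derives [nt (NTx.P a)] (TW u ++ hsh :: TW v) := by
  intro xs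
  induction xs with
  | nil =>
    intro fs e u v a heq hlen he _ _
    rw [List.length_eq_zero_iff.mp hlen] at heq
    simp only [interF, List.zipWith_nil_right, List.flatten_nil, List.append_nil] at heq
    have h2 := (der_rule (hrP0 a) rfl).trans (derH (genI_of_mk_eq_one he) u v heq.symm)
    simpa [nt] using h2
  | cons x xs' ih =>
    intro fs e u v a heq hlen he hfs hch
    obtain ⟨f, fs', rfl⟩ : ∃ f fs', fs = f :: fs' := by
      cases fs with
      | nil => simp at hlen
      | cons f fs' => exact ⟨f, fs', rfl⟩
    rw [interF_cons] at heq
    rw [Reduced, show @List.Chain' = @List.IsChain from rfl, List.isChain_cons_cons] at hch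
    obtain ⟨hx, hch'⟩ := hch
    have hlen' : fs'.length = xs'.length := by simpa using hlen
    have hf1 : FreeGroup.mk f = 1 := hfs f (by simp)
    have hfs' : ∀ g ∈ fs', FreeGroup.mk g = 1 := fun g hg => hfs g (by simp [hg])
    rcases List.append_eq_append_iff.mp heq with ⟨w', hw1, hw2⟩ | ⟨w', hw1, hw2⟩
    · -- e = u ++ w', v = w' ++ x :: (f ++ interF xs' fs')   (hash inside e)
      have h1 : (gr X).Derives (([nt NTx.H] ++ [ι x]) ++ [nt (NTx.Q x)])
          (((TW u ++ hsh :: TW w') ++ [ι x]) ++ TW (f ++ interF xs' fs')) :=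
        der_app (der_app (derH (genI_of_mk_eq_one he) u w' hw1) (Derives.refl _))
          (derQ xs' fs' f x hlen' hf1 hfs' hch')
      have h2 := (der_rule (hrP1 a x hx) rfl).trans h1
      rw [hw2]
      simpa [ι, nt] using h2
    · -- u = e ++ w', x :: (f ++ interF xs' fs') = w' ++ v
      cases w' with
      | nil =>
        simp only [List.nil_append] at hw2
        simp only [List.append_nil] at hw1
        have h1 : (gr X).Derives (([nt NTx.H] ++ [ι x]) ++ [nt (NTx.Q x)])
            (((TW u ++ hsh :: TW []) ++ [ι x]) ++ TW (f ++ interF xs' fs')) :=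
          der_app (der_app (derH (genI_of_mk_eq_one he) u [] (by simp [hw1]))
            (Derives.refl _)) (derQ xs' fs' f x hlen' hf1 hfs' hch')
        have h2 := (der_rule (hrP1 a x hx) rfl).trans h1
        rw [← hw2]
        simpa [ι, nt] using h2
      | cons y w'' =>
        simp only [List.cons_append, List.cons.injEq] at hw2
        obtain ⟨rfl, hw3⟩ := hw2
        have h1 : (gr X).Derives (([nt NTx.I] ++ [ι x]) ++ [nt (NTx.P x)])
            ((TW e ++ [ι x]) ++ (TW w'' ++ hsh :: TW v)) :=
          der_app (der_app (derI (genI_of_mk_eq_one he)) (Derives.refl _))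
            (ih fs' f w'' v x hw3.symm hlen' hf1 hfs' hch')
        have h2 := (der_rule (hrP2 a x hx) rfl).trans h1
        rw [hw1]
        simpa [ι, nt] using h2

lemma complete {s t : List (Letter X)} (h : FreeGroup.mk (s ++ t) ≠ 1) :
    (gr X).Derives [nt NTx.S] (TW s ++ hsh :: TW t) := by
  obtain ⟨e, fs, hlen, heq, he, hfs⟩ := red_decomp (FreeGroup.reduce.red (L := s ++ t))
  have hch : Reduced (FreeGroup.reduce (s ++ t)) := reduced_reduce (s ++ t)
  have hrne : FreeGroup.reduce (s ++ t) ≠ [] := by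
    intro h0
    apply h
    rw [← FreeGroup.reduce.self (L := s ++ t), h0]
    exact FreeGroup.one_eq_mk.symm
  obtain ⟨x, xs', hr⟩ : ∃ x xs', FreeGroup.reduce (s ++ t) = x :: xs' := by
    cases hx : FreeGroup.reduce (s ++ t) with
    | nil => exact absurd hx hrne
    | cons x xs' => exact ⟨x, xs', rfl⟩
  rw [hr] at heq hlen hch
  obtain ⟨f, fs', rfl⟩ : ∃ f fs', fs = f :: fs' := by
    cases fs with
    | nil => simp at hlen
    | cons f fs' => exact ⟨f, fs', rfl⟩
  rw [interF_cons] at heq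
  have hlen' : fs'.length = xs'.length := by simpa using hlen
  have hf1 : FreeGroup.mk f = 1 := hfs f (by simp)
  have hfs' : ∀ g ∈ fs', FreeGroup.mk g = 1 := fun g hg => hfs g (by simp [hg])
  rcases List.append_eq_append_iff.mp heq with ⟨w', hw1, hw2⟩ | ⟨w', hw1, hw2⟩
  · -- e = s ++ w', t = w' ++ x :: (f ++ interF xs' fs')
    have h1 : (gr X).Derives (([nt NTx.H] ++ [ι x]) ++ [nt (NTx.Q x)])
        (((TW s ++ hsh :: TW w') ++ [ι x]) ++ TW (f ++ interF xs' fs')) :=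
      der_app (der_app (derH (genI_of_mk_eq_one he) s w' hw1) (Derives.refl _))
        (derQ xs' fs' f x hlen' hf1 hfs' hch)
    have h2 := (der_rule (hrS2 x) rfl).trans h1
    rw [hw2]
    simpa [ι, nt] using h2
  · -- s = e ++ w', x :: (f ++ interF xs' fs') = w' ++ t
    cases w' with
    | nil =>
      simp only [List.nil_append] at hw2
      simp only [List.append_nil] at hw1
      have h1 : (gr X).Derives (([nt NTx.H] ++ [ι x]) ++ [nt (NTx.Q x)])
          (((TW s ++ hsh :: TW []) ++ [ι x]) ++ TW (f ++ interF xs' fs')) :=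
        der_app (der_app (derH (genI_of_mk_eq_one he) s [] (by simp [hw1]))
          (Derives.refl _)) (derQ xs' fs' f x hlen' hf1 hfs' hch)
      have h2 := (der_rule (hrS2 x) rfl).trans h1
      rw [← hw2]
      simpa [ι, nt] using h2
    | cons y w'' =>
      simp only [List.cons_append, List.cons.injEq] at hw2
      obtain ⟨rfl, hw3⟩ := hw2
      have h1 : (gr X).Derives (([nt NTx.I] ++ [ι x]) ++ [nt (NTx.P x)])
          ((TW e ++ [ι x]) ++ (TW w'' ++ hsh :: TW t)) :=
        der_app (der_app (derI (genI_of_mk_eq_one he)) (Derives.refl _))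
          (derP xs' fs' f w'' t x hw3.symm hlen' hf1 hfs' hch)
      have h2 := (der_rule (hrS1 x) rfl).trans h1
      rw [hw1]
      simpa [ι, nt] using h2

lemma linv_linv (a : Letter X) : linv (linv a) = a := by simp [linv]

lemma wordInv_wordInv (t : List (Letter X)) : wordInv (wordInv t) = t := by
  have hcomp : (linv ∘ linv : Letter X → Letter X) = id := funext linv_linv
  simp [wordInv, List.map_reverse, List.map_map, hcomp]

lemma mk_wordInv (t : List (Letter X)) :
    FreeGroup.mk (wordInv t) = (FreeGroup.mk t)⁻¹ := by
  rw [FreeGroup.inv_mk]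
  congr 1
  simp [wordInv, FreeGroup.invRev, linv, List.map_reverse]

lemma lang_eq : (gr X).language =
    ({w | ∃ u v : List (Letter X), w = encode u v ∧
      FreeGroup.mk u ≠ FreeGroup.mk v} : Language (HSym X)) := by
  ext w
  constructor
  · intro hw
    obtain ⟨s, t, rfl, hst⟩ := lang_sound hw
    refine ⟨s, wordInv t, by simp [encode, wordInv_wordInv], ?_⟩
    intro hne
    apply hst
    rw [mk_append]
    rw [mk_wordInv] at hne
    rw [hne]
    exact inv_mul_cancel _
  · rintro ⟨u, v, rfl, hne⟩
    have hne' : FreeGroup.mk (u ++ wordInv v) ≠ 1 := by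
      rw [mk_append, mk_wordInv]
      intro h0
      exact hne (by rwa [mul_inv_eq_one] at h0)
    have hd := complete hne'
    rw [ContextFreeGrammar.mem_language_iff]
    have hmap : (encode u v).map Symbol.terminal = TW u ++ hsh :: TW (wordInv v) := by
      simp [encode, TW, hsh, Function.comp_def]
    rw [hmap]
    exact hd

end CoWP
end PartE


/-- The co-word problem of the free group of finite rank is context-free. -/
theorem coWP_freeGroup_isContextFree (X : Type) [Fintype X] [DecidableEq X] :
    Language.IsContextFree
      ({w | ∃ u v : List (Letter X), w = encode u v ∧
        FreeGroup.mk u ≠ FreeGroup.mk v} : Language (HSym X)) := by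
  exact ⟨CoWP.gr X, CoWP.lang_eq⟩
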